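/- Let φ : A* → A* be a morphism, ℓ ≥ 1, and a ∈ A an unbounded letter with φ^ℓ(a) = a·w, w non-empty. Suppose k is such that φ^{ℓk}(a) contains at least two occurrences of the letter a, let v be the longest prefix of φ^{ℓk}(a) containing exactly one occurrence of a, and suppose φ^ℓ(v) = v^m for some m ≥ 2. Then the infinite fixed point (φ^ℓ)^ω(a) equals v^ω, i.e., it is purely periodic. -/

import Mathlib

def wpow {A : Type*} (w : List A) (k : ℕ) : List A := (List.replicate k w).flatten

def WordHom {A : Type*} (φ : List A → List A) : Prop :=
  ∀ x y : List A, φ (x ++ y) = φ x ++ φ y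

def BoundedLetter {A : Type*} (φ : List A → List A) (a : A) : Prop :=
  (Set.range fun j : ℕ => φ^[j] [a]).Finite

def perW {A : Type*} [Inhabited A] (z : List A) (i : ℕ) : A :=
  z.getD (i % z.length) default

section Aux
set_option linter.unusedSectionVars false
variable {A : Type*} [Inhabited A]

lemma wpow_succ (v : List A) (k : ℕ) : wpow v (k+1) = v ++ wpow v k := by
  simp [wpow, List.replicate_succ]

lemma wpow_add (v : List A) (p q : ℕ) : wpow v (p+q) = wpow v p ++ wpow v q := by
  unfold wpow; rw [List.replicate_add, List.flatten_append]

lemma wpow_one (v : List A) : wpow v 1 = v := by simp [wpow]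

lemma wpow_length (v : List A) (k : ℕ) : (wpow v k).length = k * v.length := by
  simp [wpow, mul_comm]

lemma hom_nil {φ : List A → List A} (hφ : WordHom φ) : φ [] = [] := by
  have h := hφ [] []
  simp only [List.append_nil] at h
  have := congrArg List.length h
  simp at this
  exact this

lemma hom_iter {φ : List A → List A} (hφ : WordHom φ) (n : ℕ) : WordHom (φ^[n]) := by
  induction n with
  | zero => intro x y; simp
  | succ n ih =>
    intro x y
    rw [Function.iterate_succ_apply', Function.iterate_succ_apply',
      Function.iterate_succ_apply', ih x y, hφ]

lemma hom_wpow {φ : List A → List A} (hφ : WordHom φ) (v : List A) (K : ℕ) :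
    φ (wpow v K) = wpow (φ v) K := by
  induction K with
  | zero => simpa [wpow] using hom_nil hφ
  | succ K ih => rw [wpow_succ, hφ, ih, wpow_succ]

lemma wpow_wpow (v : List A) (p q : ℕ) : wpow (wpow v p) q = wpow v (q * p) := by
  induction q with
  | zero => simp [wpow]
  | succ q ih => rw [wpow_succ, ih, Nat.succ_mul, Nat.add_comm, wpow_add]

lemma wpow_getD (v : List A) (K i : ℕ) (hi : i < K * v.length) :
    (wpow v K).getD i default = v.getD (i % v.length) default := by
  induction K generalizing i with
  | zero => omega
  | succ K ih =>
    rw [Nat.succ_mul] at hi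
    rw [wpow_succ]
    by_cases h : i < v.length
    · rw [List.getD_append _ _ _ _ h, Nat.mod_eq_of_lt h]
    · push_neg at h
      rw [List.getD_append_right _ _ _ _ h, Nat.mod_eq_sub_mod h]
      exact ih _ (by omega)

lemma prefix_getD {p z : List A} (h : p <+: z) {i : ℕ} (hi : i < p.length) :
    z.getD i default = p.getD i default := by
  obtain ⟨t, rfl⟩ := h
  rw [List.getD_append _ _ _ _ hi]

lemma hom_prefix {φ : List A → List A} (hφ : WordHom φ) {x y : List A}
    (h : x <+: y) : φ x <+: φ y := by
  obtain ⟨t, rfl⟩ := h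
  exact ⟨φ t, (hφ x t).symm⟩

end Aux

theorem stmt_18 {A : Type*} [Inhabited A] [DecidableEq A]
    (φ : List A → List A) (hφ : WordHom φ)
    (ℓ : ℕ) (hℓ : 1 ≤ ℓ) (a : A) (ha : ¬ BoundedLetter φ a)
    (w : List A) (hw : w ≠ []) (hfix : φ^[ℓ] [a] = a :: w)
    (k : ℕ) (hk : 2 ≤ (φ^[ℓ * k] [a]).count a)
    (v : List A)
    (hvpref : v <+: φ^[ℓ * k] [a]) (hvone : v.count a = 1)
    (hvlong : ∀ v' : List A, v' <+: φ^[ℓ * k] [a] → v'.count a = 1 →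
        v'.length ≤ v.length)
    (m : ℕ) (hm : 2 ≤ m) (hv : φ^[ℓ] v = wpow v m) :
    -- the fixed point `(φ^ℓ)^ω(a) = lim_n φ^{ℓn}(a)` equals `v^ω`
    ∀ i : ℕ, ∃ N : ℕ, ∀ n ≥ N, i < (φ^[ℓ * n] [a]).length ∧
        (φ^[ℓ * n] [a]).getD i default = perW v i := by
  -- v is nonempty
  have hvne : v ≠ [] := by
    intro h; rw [h] at hvone; simp at hvone
  have hvlen : 1 ≤ v.length := List.length_pos_iff.mpr hvne
  -- iterates along multiples of ℓ form a prefix chain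
  have hstep : ∀ n : ℕ, φ^[ℓ * n] [a] <+: φ^[ℓ * (n+1)] [a] := by
    intro n
    have : φ^[ℓ * (n+1)] [a] = φ^[ℓ * n] [a] ++ φ^[ℓ * n] w := by
      rw [Nat.mul_succ, Function.iterate_add_apply, hfix,
        show (a :: w) = [a] ++ w from rfl, hom_iter hφ (ℓ * n)]
    exact ⟨φ^[ℓ * n] w, this.symm⟩
  have hchain : ∀ n n' : ℕ, n ≤ n' → φ^[ℓ * n] [a] <+: φ^[ℓ * n'] [a] := by
    intro n n' h
    induction n', h using Nat.le_induction with
    | base => exact List.prefix_refl _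
    | succ n' hn ih => exact ih.trans (hstep n')
  -- φ^[ℓ*n] v = v^(m^n)
  have hitv : ∀ n : ℕ, φ^[ℓ * n] v = wpow v (m ^ n) := by
    intro n
    induction n with
    | zero => simp [wpow_one]
    | succ n ih =>
      rw [Nat.mul_succ, Function.iterate_add_apply, hv,
        hom_wpow (hom_iter hφ (ℓ * n)), ih, wpow_wpow, ← pow_succ']
  intro i
  refine ⟨i + k, fun n hn => ?_⟩
  -- v^(m^i) is a prefix of φ^[ℓ*n] [a]
  have hpref1 : wpow v (m ^ i) <+: φ^[ℓ * (i + k)] [a] := by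
    have h1 : φ^[ℓ * i] v <+: φ^[ℓ * i] (φ^[ℓ * k] [a]) :=
      hom_prefix (hom_iter hφ (ℓ * i)) hvpref
    rwa [hitv i, ← Function.iterate_add_apply, ← Nat.mul_add] at h1
  have hpref : wpow v (m ^ i) <+: φ^[ℓ * n] [a] :=
    hpref1.trans (hchain _ _ hn)
  have hmi : i < m ^ i := lt_of_lt_of_le (Nat.lt_two_pow_self (n := i)) (Nat.pow_le_pow_left hm i)
  have hilen : i < (wpow v (m ^ i)).length := by
    rw [wpow_length]
    calc i < m ^ i := hmi
    _ = m ^ i * 1 := (mul_one _).symm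
    _ ≤ m ^ i * v.length := Nat.mul_le_mul_left _ hvlen
  refine ⟨lt_of_lt_of_le hilen hpref.length_le, ?_⟩
  rw [prefix_getD hpref hilen, wpow_getD v _ _ (by rwa [wpow_length] at hilen)]
  rfl
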